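/- (Remark, asymptotics when ε/ρ is unbounded.) For every integer r ≥ 1 there exists a constant c > 0 such that for all real ε, ρ with 0 < ρ ≤ ε, the value δ := c · ε^{1/r} · ρ^{(r−1)/r} (real powers) satisfies δ(1 + P_{r−1}(δ/ρ)) < ε. -/

import Mathlib

open Polynomial Finset

lemma myDegP (P : ℕ → Polynomial ℝ)
    (hP0 : P 0 = 0)
    (hP1 : P 1 = Polynomial.C 2 * Polynomial.X)
    (hPk : ∀ k, 2 ≤ k → P k =
      Polynomial.C (2 * (k : ℝ)) * Polynomial.X
        + ∑ l ∈ Finset.Icc 2 k, Polynomial.C 3 * Polynomial.X * P (l - 1)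
        + ∑ l ∈ Finset.Icc 2 (k - 1), Polynomial.X * P (l - 1) * P (k - l)) :
    ∀ k, (P k).natDegree ≤ k := by
  intro k
  induction k using Nat.strong_induction_on with
  | _ k ih =>
    match k with
    | 0 => simp [hP0]
    | 1 =>
      rw [hP1]
      refine (natDegree_mul_le).trans ?_
      simp [natDegree_X_le]
    | (n+2) =>
      rw [hPk (n+2) (by omega)]
      refine (natDegree_add_le _ _).trans (max_le ((natDegree_add_le _ _).trans (max_le ?_ ?_)) ?_)
      · refine (natDegree_mul_le).trans ?_
        rw [natDegree_C, natDegree_X]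
        omega
      · refine natDegree_sum_le_of_forall_le _ _ (fun l hl => ?_)
        simp only [Finset.mem_Icc] at hl
        refine (natDegree_mul_le).trans ?_
        have h1 : (Polynomial.C (3:ℝ) * Polynomial.X).natDegree ≤ 1 :=
          (natDegree_mul_le).trans (by simp [natDegree_X_le])
        have h2 : (P (l-1)).natDegree ≤ l - 1 := ih (l-1) (by omega)
        omega
      · refine natDegree_sum_le_of_forall_le _ _ (fun l hl => ?_)
        simp only [Finset.mem_Icc] at hl
        refine (natDegree_mul_le).trans ?_
        have h1 : ((Polynomial.X : Polynomial ℝ) * P (l-1)).natDegree ≤ 1 + (l-1) := by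
          refine (natDegree_mul_le).trans ?_
          have := ih (l-1) (by omega)
          have := natDegree_X_le (R := ℝ)
          omega
        have h2 : (P (n+2-l)).natDegree ≤ n+2-l := ih (n+2-l) (by omega)
        omega

lemma myCoeff0 (P : ℕ → Polynomial ℝ)
    (hP0 : P 0 = 0)
    (hP1 : P 1 = Polynomial.C 2 * Polynomial.X)
    (hPk : ∀ k, 2 ≤ k → P k =
      Polynomial.C (2 * (k : ℝ)) * Polynomial.X
        + ∑ l ∈ Finset.Icc 2 k, Polynomial.C 3 * Polynomial.X * P (l - 1)
        + ∑ l ∈ Finset.Icc 2 (k - 1), Polynomial.X * P (l - 1) * P (k - l)) :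
    ∀ k, (P k).coeff 0 = 0 := by
  intro k
  match k with
  | 0 => simp [hP0]
  | 1 => simp [hP1]
  | (n+2) =>
    rw [hPk (n+2) (by omega)]
    simp [finset_sum_coeff, mul_coeff_zero, coeff_X_zero]

lemma myEvalBound (Q : Polynomial ℝ) (d : ℕ) (hdeg : Q.natDegree ≤ d) (h0 : Q.coeff 0 = 0)
    (c t : ℝ) (hc0 : 0 ≤ c) (hc1 : c ≤ 1) (ht : 1 ≤ t) :
    Q.eval (c * t) ≤ (∑ i ∈ Finset.range (d+1), |Q.coeff i|) * (c * t^d) := by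
  have ht0 : (0:ℝ) ≤ t := le_trans zero_le_one ht
  rw [Polynomial.eval_eq_sum_range' (Nat.lt_succ_of_le hdeg), Finset.sum_mul]
  refine Finset.sum_le_sum (fun i hi => ?_)
  simp only [Finset.mem_range] at hi
  rcases Nat.eq_zero_or_pos i with hi0 | hi0
  · subst hi0
    simp only [h0, zero_mul, pow_zero]
    positivity
  · have h1 : Q.coeff i * (c*t)^i ≤ |Q.coeff i| * (c*t)^i := by
      apply mul_le_mul_of_nonneg_right (le_abs_self _)
      positivity
    refine h1.trans (mul_le_mul_of_nonneg_left ?_ (abs_nonneg _))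
    rw [mul_pow]
    have hc : c^i ≤ c := by
      calc c^i ≤ c^1 := pow_le_pow_of_le_one hc0 hc1 hi0
      _ = c := pow_one c
    have htp : t^i ≤ t^d := pow_le_pow_right₀ ht (by omega)
    exact mul_le_mul hc htp (by positivity) hc0

theorem delta_rpow_asymptotics
    (P : ℕ → Polynomial ℝ)
    (hP0 : P 0 = 0)
    (hP1 : P 1 = Polynomial.C 2 * Polynomial.X)
    (hPk : ∀ k, 2 ≤ k → P k =
      Polynomial.C (2 * (k : ℝ)) * Polynomial.X
        + ∑ l ∈ Finset.Icc 2 k, Polynomial.C 3 * Polynomial.X * P (l - 1)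
        + ∑ l ∈ Finset.Icc 2 (k - 1), Polynomial.X * P (l - 1) * P (k - l))
    (r : ℕ) (hr : 1 ≤ r) :
    ∃ c : ℝ, 0 < c ∧
      ∀ ε ρ : ℝ, 0 < ρ → ρ ≤ ε →
        (c * ε ^ ((1 : ℝ) / r) * ρ ^ (((r : ℝ) - 1) / r)) *
            (1 + (P (r - 1)).eval
              ((c * ε ^ ((1 : ℝ) / r) * ρ ^ (((r : ℝ) - 1) / r)) / ρ)) < ε := by
  set d := r - 1 with hd
  set Q := P d with hQ
  set A := ∑ i ∈ Finset.range (d+1), |Q.coeff i| with hA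
  have hA0 : 0 ≤ A := Finset.sum_nonneg (fun i _ => abs_nonneg _)
  refine ⟨1/(2*(A+1)), by positivity, fun ε ρ hρ hρε => ?_⟩
  set c : ℝ := 1/(2*(A+1)) with hc
  have hc0 : 0 < c := by positivity
  have hc1 : c ≤ 1 := by
    rw [hc, div_le_one (by positivity)]; nlinarith
  have hε : 0 < ε := lt_of_lt_of_le hρ hρε
  set t : ℝ := (ε/ρ) ^ ((1:ℝ)/r) with hT
  have hratio : (1:ℝ) ≤ ε/ρ := (one_le_div hρ).mpr hρε
  have ht : 1 ≤ t := by
    rw [hT]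
    calc (1:ℝ) = 1 ^ ((1:ℝ)/r) := (Real.one_rpow _).symm
    _ ≤ (ε/ρ) ^ ((1:ℝ)/r) := Real.rpow_le_rpow zero_le_one hratio (by positivity)
  have ht0 : (0:ℝ) < t := lt_of_lt_of_le one_pos ht
  have hr0 : (0:ℝ) < (r:ℝ) := by exact_mod_cast hr
  -- δ = c * t * ρ
  have hδ : c * ε ^ ((1 : ℝ) / r) * ρ ^ (((r : ℝ) - 1) / r) = c * t * ρ := by
    have h1 : ε ^ ((1:ℝ)/r) = (ε/ρ) ^ ((1:ℝ)/r) * ρ ^ ((1:ℝ)/r) := by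
      rw [← Real.mul_rpow (by positivity) hρ.le, div_mul_cancel₀]
      exact ne_of_gt hρ
    have h2 : ρ ^ ((1:ℝ)/r) * ρ ^ (((r:ℝ) - 1)/r) = ρ := by
      rw [← Real.rpow_add hρ]
      have : (1:ℝ)/r + ((r:ℝ)-1)/r = 1 := by field_simp; ring
      rw [this, Real.rpow_one]
    have h3 : c * ((ε/ρ)^((1:ℝ)/r) * ρ^((1:ℝ)/r)) * ρ^(((r:ℝ)-1)/r)
        = c * (ε/ρ)^((1:ℝ)/r) * (ρ^((1:ℝ)/r) * ρ^(((r:ℝ)-1)/r)) := by ring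
    rw [h1, hT, h3, h2]
  have htr : t ^ r = ε / ρ := by
    rw [hT, ← Real.rpow_natCast ((ε/ρ) ^ ((1:ℝ)/r)) r, ← Real.rpow_mul (by positivity)]
    rw [one_div_mul_cancel (ne_of_gt hr0), Real.rpow_one]
  rw [hδ]
  have hdiv : c * t * ρ / ρ = c * t := by field_simp
  rw [hdiv]
  have hεeq : ε = t ^ r * ρ := by rw [htr]; field_simp
  rw [hεeq]
  have key : c * t * (1 + Q.eval (c * t)) < t ^ r := by
    have hb := myEvalBound Q d (myDegP P hP0 hP1 hPk d) (myCoeff0 P hP0 hP1 hPk d)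
      c t hc0.le hc1 ht
    have hstep : c * t * (1 + Q.eval (c*t)) ≤ c * t * (1 + A * (c * t^d)) := by
      apply mul_le_mul_of_nonneg_left _ (by positivity)
      linarith
    refine lt_of_le_of_lt hstep ?_
    have htd : t * t^d = t^r := by
      rw [← pow_succ']
      congr 1
      omega
    have hts : t ≤ t^r := le_self_pow₀ ht (by omega)
    have hcA : c + A * c^2 < 1 := by
      have h2 : c * (2*(A+1)) = 1 := by rw [hc]; field_simp
      nlinarith
    have htr0 : 0 < t^r := by positivity
    calc c * t * (1 + A * (c * t^d)) = c * t + A * c^2 * (t * t^d) := by ring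
    _ = c * t + A * c^2 * t^r := by rw [htd]
    _ ≤ c * t^r + A * c^2 * t^r := by nlinarith
    _ = (c + A * c^2) * t^r := by ring
    _ < 1 * t^r := by exact mul_lt_mul_of_pos_right hcA htr0
    _ = t^r := one_mul _
  calc c * t * ρ * (1 + Q.eval (c * t)) = (c * t * (1 + Q.eval (c * t))) * ρ := by ring
  _ < t ^ r * ρ := mul_lt_mul_of_pos_right key hρ
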